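/- The measures ξ* and η* are diffuse, i.e. ξ*{t} = 0 and η*{t} = 0 for every t ∈ ℝ. Moreover, if ξ and η are mutually singular, then ξ* and η* are mutually singular. -/

import Mathlib

open MeasureTheory

/-- The purely atomic part `μ^d` of a measure on `ℝ`. -/
noncomputable def atomicPart (μ : Measure ℝ) : Measure ℝ :=
  μ.restrict {t : ℝ | μ {t} ≠ 0}

/-- The diffuse part `μ^c` of a measure on `ℝ`. -/
noncomputable def diffusePart (μ : Measure ℝ) : Measure ℝ :=
  μ.restrict {t : ℝ | μ {t} = 0}

/-- The time change `ζ`. -/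
noncomputable def zeta (ξ η : Measure ℝ) (s : ℝ) : ℝ :=
  if 0 ≤ s then
    s + (atomicPart ξ (Set.Ico 0 s)).toReal + (atomicPart η (Set.Ico 0 s)).toReal
  else
    s - (atomicPart ξ (Set.Ico s 0)).toReal - (atomicPart η (Set.Ico s 0)).toReal

/-- The stretched measure `μ*` built from `μ` using the time change `ζ` of `(ξ, η)`. -/
noncomputable def starM (ξ η μ : Measure ℝ) : Measure ℝ :=
  (diffusePart μ).map (zeta ξ η) +
    (atomicPart μ).bind fun t =>
      (μ {t})⁻¹ • volume.restrict (Set.Icc (zeta ξ η t) (zeta ξ η t + (μ {t}).toReal))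

lemma atomicPart_singleton (μ : Measure ℝ) (t : ℝ) : atomicPart μ {t} = μ {t} := by
  rw [atomicPart, Measure.restrict_apply (measurableSet_singleton t)]
  by_cases h : μ {t} = 0
  · rw [h]; exact measure_mono_null Set.inter_subset_left h
  · have : {t} ∩ {x : ℝ | μ {x} ≠ 0} = {t} := by
      ext x
      simp only [Set.mem_inter_iff, Set.mem_singleton_iff, Set.mem_setOf_eq]
      exact ⟨fun h' => h'.1, fun h' => ⟨h', h' ▸ h⟩⟩
    rw [this]

lemma diffusePart_singleton (μ : Measure ℝ) (t : ℝ) : diffusePart μ {t} = 0 := by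
  rw [diffusePart, Measure.restrict_apply (measurableSet_singleton t)]
  by_cases h : μ {t} = 0
  · exact measure_mono_null Set.inter_subset_left h
  · have : {t} ∩ {x : ℝ | μ {x} = 0} = ∅ := by
      ext x
      simp only [Set.mem_inter_iff, Set.mem_singleton_iff, Set.mem_setOf_eq,
        Set.mem_empty_iff_false, iff_false, not_and]
      rintro rfl; exact h
    rw [this, measure_empty]

/-- the signed cumulative atomic mass -/
noncomputable def phiM (μ : Measure ℝ) (s : ℝ) : ℝ :=
  if 0 ≤ s then (atomicPart μ (Set.Ico 0 s)).toReal else -(atomicPart μ (Set.Ico s 0)).toReal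

lemma zeta_eq_phi (ξ η : Measure ℝ) (s : ℝ) : zeta ξ η s = s + phiM ξ s + phiM η s := by
  unfold zeta phiM
  split <;> ring

lemma atomicPart_Ico_ne_top (μ : Measure ℝ) [IsLocallyFiniteMeasure μ] (a b : ℝ) :
    atomicPart μ (Set.Ico a b) ≠ ⊤ := by
  have h1 : atomicPart μ (Set.Ico a b) ≤ μ (Set.Icc a b) :=
    le_trans (Measure.restrict_apply_le _ _) (measure_mono Set.Ico_subset_Icc_self)
  exact (lt_of_le_of_lt h1 isCompact_Icc.measure_lt_top).ne

lemma phiM_add_le (μ : Measure ℝ) [IsLocallyFiniteMeasure μ] {s t : ℝ} (h : s < t) :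
    phiM μ s + (μ {s}).toReal ≤ phiM μ t := by
  have hfin := atomicPart_Ico_ne_top μ
  by_cases hs : 0 ≤ s
  · have ht : 0 ≤ t := hs.trans h.le
    rw [phiM, phiM, if_pos hs, if_pos ht]
    have hdisj : Disjoint (Set.Ico (0:ℝ) s) {s} := by
      simp [Set.disjoint_singleton_right]
    have h1 : atomicPart μ (Set.Ico 0 s) + atomicPart μ {s} ≤ atomicPart μ (Set.Ico 0 t) := by
      rw [← measure_union hdisj (measurableSet_singleton s), Set.Ico_union_right hs]
      exact measure_mono (Set.Icc_subset_Ico_right h)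
    have h2 := ENNReal.toReal_mono (hfin 0 t) h1
    rw [ENNReal.toReal_add (hfin 0 s)
      (ne_top_of_le_ne_top (hfin 0 t) (le_trans le_add_self h1)), atomicPart_singleton] at h2
    exact h2
  · push_neg at hs
    by_cases ht : 0 ≤ t
    · rw [phiM, phiM, if_neg (not_le.mpr hs), if_pos ht]
      have h1 : atomicPart μ {s} ≤ atomicPart μ (Set.Ico s 0) :=
        measure_mono (Set.singleton_subset_iff.mpr ⟨le_refl s, hs⟩)
      have h2 := ENNReal.toReal_mono (hfin s 0) h1
      rw [atomicPart_singleton] at h2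
      have h3 : (0:ℝ) ≤ (atomicPart μ (Set.Ico 0 t)).toReal := ENNReal.toReal_nonneg
      linarith
    · push_neg at ht
      rw [phiM, phiM, if_neg (not_le.mpr hs), if_neg (not_le.mpr ht)]
      have hdisj : Disjoint (Set.Ico t (0:ℝ)) {s} := by
        simp only [Set.disjoint_singleton_right, Set.mem_Ico, not_and, not_lt]
        intro hts; exact absurd hts (not_le.mpr h)
      have h1 : atomicPart μ (Set.Ico t 0) + atomicPart μ {s} ≤ atomicPart μ (Set.Ico s 0) := by
        rw [← measure_union hdisj (measurableSet_singleton s)]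
        refine measure_mono (Set.union_subset (Set.Ico_subset_Ico_left h.le) ?_)
        exact Set.singleton_subset_iff.mpr ⟨le_refl s, hs⟩
      have h2 := ENNReal.toReal_mono (hfin s 0) h1
      rw [ENNReal.toReal_add (hfin t 0)
        (ne_top_of_le_ne_top (hfin s 0) (le_trans le_add_self h1)), atomicPart_singleton] at h2
      linarith

lemma zeta_gap (ξ η : Measure ℝ) [IsLocallyFiniteMeasure ξ] [IsLocallyFiniteMeasure η]
    {s t : ℝ} (h : s < t) :
    zeta ξ η s + (ξ {s}).toReal + (η {s}).toReal + (t - s) ≤ zeta ξ η t := by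
  have h1 := phiM_add_le ξ h
  have h2 := phiM_add_le η h
  rw [zeta_eq_phi, zeta_eq_phi]
  linarith

lemma zeta_strictMono (ξ η : Measure ℝ) [IsLocallyFiniteMeasure ξ] [IsLocallyFiniteMeasure η] :
    StrictMono (zeta ξ η) := by
  intro s t h
  have := zeta_gap ξ η h
  have h1 : (0:ℝ) ≤ (ξ {s}).toReal := ENNReal.toReal_nonneg
  have h2 : (0:ℝ) ≤ (η {s}).toReal := ENNReal.toReal_nonneg
  linarith

lemma zeta_measurable (ξ η : Measure ℝ) [IsLocallyFiniteMeasure ξ] [IsLocallyFiniteMeasure η] :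
    Measurable (zeta ξ η) :=
  (zeta_strictMono ξ η).monotone.measurable

lemma zeta_injective (ξ η : Measure ℝ) [IsLocallyFiniteMeasure ξ] [IsLocallyFiniteMeasure η] :
    Function.Injective (zeta ξ η) :=
  (zeta_strictMono ξ η).injective

lemma zeta_embedding (ξ η : Measure ℝ) [IsLocallyFiniteMeasure ξ] [IsLocallyFiniteMeasure η] :
    MeasurableEmbedding (zeta ξ η) :=
  (zeta_measurable ξ η).measurableEmbedding (zeta_injective ξ η)

lemma zeta_mem_Icc (ξ η : Measure ℝ) [IsLocallyFiniteMeasure ξ] [IsLocallyFiniteMeasure η]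
    {t v : ℝ}
    (h : zeta ξ η v ∈ Set.Icc (zeta ξ η t) (zeta ξ η t + (ξ {t}).toReal + (η {t}).toReal)) :
    v = t := by
  rcases lt_trichotomy v t with hvt | rfl | htv
  · exact absurd (zeta_strictMono ξ η hvt) (not_lt.mpr h.1)
  · rfl
  · have := zeta_gap ξ η htv
    have h2 := h.2
    linarith

lemma bind_null {m : Measure ℝ} {f : ℝ → Measure ℝ} {s : Set ℝ} (hs : MeasurableSet s)
    (h : ∀ᵐ t ∂m, f t s = 0) : m.bind f s = 0 := by
  rw [Measure.bind, Measure.join_apply hs]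
  by_cases hf : AEMeasurable f m
  · rw [lintegral_map' (Measure.measurable_coe hs).aemeasurable hf]
    exact (lintegral_congr_ae h).trans lintegral_zero
  · rw [Measure.map_of_not_aemeasurable hf, lintegral_zero_measure]

lemma vol_Icc_inter {a b c d : ℝ} (h : b ≤ c) :
    volume (Set.Icc a b ∩ Set.Icc c d) = 0 := by
  have hsub : Set.Icc a b ∩ Set.Icc c d ⊆ Set.Icc c b := fun x hx => ⟨hx.2.1, hx.1.2⟩
  refine measure_mono_null hsub ?_
  rw [Real.volume_Icc]
  exact ENNReal.ofReal_eq_zero.mpr (by linarith)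

/-- The measures `ξ*` and `η*` are diffuse, and if `ξ` and `η` are mutually singular
then so are `ξ*` and `η*`. -/
theorem starM_diffuse_and_mutuallySingular (ξ η : Measure ℝ)
    [IsLocallyFiniteMeasure ξ] [IsLocallyFiniteMeasure η] :
    (∀ t : ℝ, starM ξ η ξ {t} = 0) ∧ (∀ t : ℝ, starM ξ η η {t} = 0) ∧
      (ξ ⟂ₘ η → starM ξ η ξ ⟂ₘ starM ξ η η) := by
  have hζm := zeta_measurable ξ η
  have hζi := zeta_injective ξ η
  -- diffuseness
  have key : ∀ μ : Measure ℝ, ∀ v : ℝ, starM ξ η μ {v} = 0 := by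
    intro μ v
    rw [starM, Measure.add_apply]
    have hmap : (diffusePart μ).map (zeta ξ η) {v} = 0 := by
      rw [Measure.map_apply hζm (measurableSet_singleton v)]
      by_cases hex : ∃ u, zeta ξ η u = v
      · obtain ⟨u, hu⟩ := hex
        refine measure_mono_null (fun x hx => ?_) (diffusePart_singleton μ u)
        have : zeta ξ η x = zeta ξ η u := by
          rw [hu]; exact hx
        exact hζi this
      · have : zeta ξ η ⁻¹' {v} = ∅ := by
          ext x; simp only [Set.mem_preimage, Set.mem_singleton_iff, Set.mem_empty_iff_false,
            iff_false]
          exact fun hx => hex ⟨x, hx⟩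
        rw [this, measure_empty]
    have hbind : ((atomicPart μ).bind fun t =>
        (μ {t})⁻¹ • volume.restrict
          (Set.Icc (zeta ξ η t) (zeta ξ η t + (μ {t}).toReal))) {v} = 0 := by
      refine bind_null (measurableSet_singleton v) (Filter.Eventually.of_forall fun t => ?_)
      rw [Measure.smul_apply, Measure.restrict_apply (measurableSet_singleton v), smul_eq_mul]
      rw [measure_mono_null Set.inter_subset_left (measure_singleton v), mul_zero]
    rw [hmap, hbind, add_zero]
  refine ⟨key ξ, key η, ?_⟩
  -- mutual singularity
  rintro ⟨S, hSm, hξS, hηSc⟩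
  set Aξ : Set ℝ := {x : ℝ | ξ {x} ≠ 0} with hAξdef
  set Aη : Set ℝ := {x : ℝ | η {x} ≠ 0} with hAηdef
  have hcξ : Aξ.Countable := by
    have h := Measure.countable_meas_pos_of_disjoint_iUnion₀ (μ := ξ)
      (As := fun x : ℝ => {x}) (fun x => (measurableSet_singleton x).nullMeasurableSet)
      (fun x y hxy => (Set.disjoint_singleton.mpr hxy).aedisjoint)
    refine h.mono fun x hx => ?_
    exact pos_iff_ne_zero.mpr hx
  have hcη : Aη.Countable := by
    have h := Measure.countable_meas_pos_of_disjoint_iUnion₀ (μ := η)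
      (As := fun x : ℝ => {x}) (fun x => (measurableSet_singleton x).nullMeasurableSet)
      (fun x y hxy => (Set.disjoint_singleton.mpr hxy).aedisjoint)
    refine h.mono fun x hx => ?_
    exact pos_iff_ne_zero.mpr hx
  set I : ℝ → Set ℝ := fun t => Set.Icc (zeta ξ η t) (zeta ξ η t + (ξ {t}).toReal) with hIdef
  set J : ℝ → Set ℝ := fun t => Set.Icc (zeta ξ η t) (zeta ξ η t + (η {t}).toReal) with hJdef
  set D : Set ℝ := zeta ξ η '' (Sᶜ \ (Aξ ∪ Aη)) ∪ ⋃ t ∈ Aξ, I t with hDdef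
  have hDm : MeasurableSet D := by
    refine MeasurableSet.union ?_ (MeasurableSet.biUnion hcξ fun t _ => measurableSet_Icc)
    exact (zeta_embedding ξ η).measurableSet_image.mpr
      (hSm.compl.diff (hcξ.union hcη).measurableSet)
  -- atoms of ξ and η are disjoint
  have hdisjatoms : ∀ t : ℝ, ξ {t} = 0 ∨ η {t} = 0 := by
    intro t
    by_cases ht : t ∈ S
    · exact Or.inl (measure_mono_null (Set.singleton_subset_iff.mpr ht) hξS)
    · exact Or.inr (measure_mono_null (Set.singleton_subset_iff.mpr ht) hηSc)
  -- membership in I t / J t forces equality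
  have hmemI : ∀ t v : ℝ, zeta ξ η v ∈ I t → v = t := by
    intro t v hv
    refine zeta_mem_Icc ξ η ⟨hv.1, hv.2.trans ?_⟩
    have : (0:ℝ) ≤ (η {t}).toReal := ENNReal.toReal_nonneg
    linarith
  have hmemJ : ∀ t v : ℝ, zeta ξ η v ∈ J t → v = t := by
    intro t v hv
    have h1 : (0:ℝ) ≤ (ξ {t}).toReal := ENNReal.toReal_nonneg
    refine zeta_mem_Icc ξ η ⟨?_, ?_⟩
    · exact hv.1
    · have := hv.2; linarith
  -- intervals at distinct points intersect in null sets
  have hIJ : ∀ s t : ℝ, s ≠ t → volume (I s ∩ J t) = 0 := by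
    intro s t hst
    rcases lt_or_gt_of_ne hst with h | h
    · have hg := zeta_gap ξ η h
      have h1 : (0:ℝ) ≤ (η {s}).toReal := ENNReal.toReal_nonneg
      exact vol_Icc_inter (by linarith)
    · have hg := zeta_gap ξ η h
      have h1 : (0:ℝ) ≤ (ξ {t}).toReal := ENNReal.toReal_nonneg
      rw [Set.inter_comm]
      exact vol_Icc_inter (by linarith)
  -- η* D = 0
  have hηD : starM ξ η η D = 0 := by
    rw [starM, Measure.add_apply]
    have hmap : (diffusePart η).map (zeta ξ η) D = 0 := by
      rw [Measure.map_apply hζm hDm]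
      have hsub : zeta ξ η ⁻¹' D ⊆ Sᶜ ∪ ⋃ t ∈ Aξ, {t} := by
        intro x hx
        rcases hx with hx | hx
        · obtain ⟨u, hu, hux⟩ := hx
          left
          exact (hζi hux.symm) ▸ hu.1
        · simp only [Set.mem_iUnion] at hx
          obtain ⟨t, ht, hxt⟩ := hx
          right
          simp only [Set.mem_iUnion]
          exact ⟨t, ht, by rw [hmemI t x hxt]; rfl⟩
      refine measure_mono_null hsub (measure_union_null ?_ ?_)
      · exact le_antisymm (le_trans (Measure.restrict_apply_le _ _) hηSc.le) zero_le
      · exact (measure_biUnion_null_iff hcξ).mpr fun t _ => diffusePart_singleton η t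
    have hbind : ((atomicPart η).bind fun t =>
        (η {t})⁻¹ • volume.restrict
          (Set.Icc (zeta ξ η t) (zeta ξ η t + (η {t}).toReal))) D = 0 := by
      have hae : ∀ᵐ t ∂(atomicPart η), t ∈ Aη := by
        rw [atomicPart]
        exact ae_restrict_mem hcη.measurableSet
      refine bind_null hDm ?_
      filter_upwards [hae] with t ht
      rw [Measure.smul_apply, Measure.restrict_apply hDm, smul_eq_mul]
      have hvol : volume (D ∩ J t) = 0 := by
        have hsub : D ∩ J t ⊆ ⋃ s ∈ Aξ, I s ∩ J t := by
          rintro x ⟨hxD, hxJ⟩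
          rcases hxD with hx | hx
          · exfalso
            obtain ⟨u, hu, hux⟩ := hx
            have : u = t := hmemJ t u (hux ▸ hxJ)
            exact (this ▸ hu.2) (Or.inr ht)
          · simp only [Set.mem_iUnion] at hx ⊢
            obtain ⟨s, hs, hxs⟩ := hx
            exact ⟨s, hs, hxs, hxJ⟩
        refine measure_mono_null hsub ((measure_biUnion_null_iff hcξ).mpr fun s hs => ?_)
        refine hIJ s t fun hst => ?_
        rcases hdisjatoms t with h | h
        · exact (hst ▸ hs) h
        · exact ht h
      rw [hvol, mul_zero]
    rw [hmap, hbind, add_zero]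
  -- ξ* Dᶜ = 0
  have hξDc : starM ξ η ξ Dᶜ = 0 := by
    rw [starM, Measure.add_apply]
    have hmap : (diffusePart ξ).map (zeta ξ η) Dᶜ = 0 := by
      rw [Measure.map_apply hζm hDm.compl]
      have hsub : zeta ξ η ⁻¹' Dᶜ ⊆ S ∪ (Aξ ∪ Aη) := by
        intro x hx
        by_contra hcon
        simp only [Set.mem_union, not_or] at hcon
        refine hx (Or.inl ⟨x, ⟨hcon.1, ?_⟩, rfl⟩)
        simp only [Set.mem_union, not_or]
        exact hcon.2
      refine measure_mono_null hsub (measure_union_null ?_ ?_)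
      · exact le_antisymm (le_trans (Measure.restrict_apply_le _ _) hξS.le) zero_le
      · rw [← Set.biUnion_of_singleton (Aξ ∪ Aη)]
        exact (measure_biUnion_null_iff (hcξ.union hcη)).mpr
          fun t _ => diffusePart_singleton ξ t
    have hbind : ((atomicPart ξ).bind fun t =>
        (ξ {t})⁻¹ • volume.restrict
          (Set.Icc (zeta ξ η t) (zeta ξ η t + (ξ {t}).toReal))) Dᶜ = 0 := by
      have hae : ∀ᵐ t ∂(atomicPart ξ), t ∈ Aξ := by
        rw [atomicPart]
        exact ae_restrict_mem hcξ.measurableSet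
      refine bind_null hDm.compl ?_
      filter_upwards [hae] with t ht
      rw [Measure.smul_apply, Measure.restrict_apply hDm.compl, smul_eq_mul]
      have hempty : Dᶜ ∩ I t = ∅ := by
        ext x
        simp only [Set.mem_inter_iff, Set.mem_compl_iff, Set.mem_empty_iff_false, iff_false,
          not_and]
        intro hxD hxI
        refine hxD (Or.inr ?_)
        simp only [Set.mem_iUnion]
        exact ⟨t, ht, hxI⟩
      rw [hempty, measure_empty, mul_zero]
    rw [hmap, hbind, add_zero]
  exact ⟨Dᶜ, hDm.compl, hξDc, by rwa [compl_compl]⟩
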